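/- arXiv:2308.14237 — 2 statements merged into one kernel-verified Lean document; each statement's English description precedes it below -/
import Mathlib

section
/- The finitely presented group $G$ has exactly $294$ elements. -/
/-- The free group on four generators `t₁,…,t₄` (indices 0–3). -/
abbrev F4 : Type := FreeGroup (Fin 4)

/-- The generators of the free group on four letters. -/
def t (i : Fin 4) : F4 := FreeGroup.of i

/-- The relations `t₁² = t₂⁷ = (t₁t₂)² = t₃⁷ = t₄³ = 1`, `t₁t₃ = t₃t₁`, `t₂t₃ = t₃t₂`,
`t₄t₁t₄⁻¹ = t₁`, `t₄t₂t₄⁻¹ = t₂⁴`, `t₄t₃t₄⁻¹ = t₃²`. -/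
def relsG : Set F4 :=
  { t 0 ^ 2, t 1 ^ 7, (t 0 * t 1) ^ 2, t 2 ^ 7, t 3 ^ 3,
    (t 0 * t 2) * (t 2 * t 0)⁻¹,
    (t 1 * t 2) * (t 2 * t 1)⁻¹,
    (t 3 * t 0 * (t 3)⁻¹) * (t 0)⁻¹,
    (t 3 * t 1 * (t 3)⁻¹) * (t 1 ^ 4)⁻¹,
    (t 3 * t 2 * (t 3)⁻¹) * (t 2 ^ 2)⁻¹ }

/-- The finitely presented group `G` with generators `t₁,…,t₄`. -/
abbrev G : Type := PresentedGroup relsG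

/-- The images of the generators `t₁,…,t₄` in `G`. -/
def tg (i : Fin 4) : G := PresentedGroup.of i

namespace CardGAux

lemma rel_mk {r : F4} (h : r ∈ relsG) : PresentedGroup.mk relsG r = 1 :=
  (QuotientGroup.eq_one_iff r).mpr (Subgroup.subset_normalClosure h)

lemma mk_t (i : Fin 4) : PresentedGroup.mk relsG (t i) = tg i := rfl

lemma r1 : tg 0 ^ 2 = 1 := by
  have := rel_mk (show (t 0 ^ 2 : F4) ∈ relsG by simp [relsG])
  rwa [map_pow, mk_t] at this

lemma r2 : tg 1 ^ 7 = 1 := by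
  have := rel_mk (show (t 1 ^ 7 : F4) ∈ relsG by simp [relsG])
  rwa [map_pow, mk_t] at this

lemma r3 : (tg 0 * tg 1) ^ 2 = 1 := by
  have := rel_mk (show ((t 0 * t 1) ^ 2 : F4) ∈ relsG by simp [relsG])
  rwa [map_pow, map_mul, mk_t, mk_t] at this

lemma r4 : tg 2 ^ 7 = 1 := by
  have := rel_mk (show (t 2 ^ 7 : F4) ∈ relsG by simp [relsG])
  rwa [map_pow, mk_t] at this

lemma r5 : tg 3 ^ 3 = 1 := by
  have := rel_mk (show (t 3 ^ 3 : F4) ∈ relsG by simp [relsG])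
  rwa [map_pow, mk_t] at this

lemma r6 : tg 0 * tg 2 = tg 2 * tg 0 := by
  have := rel_mk (show ((t 0 * t 2) * (t 2 * t 0)⁻¹ : F4) ∈ relsG by simp [relsG])
  rw [map_mul, map_inv, map_mul, map_mul, mk_t, mk_t] at this
  exact mul_inv_eq_one.mp this

lemma r7 : tg 1 * tg 2 = tg 2 * tg 1 := by
  have := rel_mk (show ((t 1 * t 2) * (t 2 * t 1)⁻¹ : F4) ∈ relsG by simp [relsG])
  rw [map_mul, map_inv, map_mul, map_mul, mk_t, mk_t] at this
  exact mul_inv_eq_one.mp this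

lemma r8 : tg 3 * tg 0 = tg 0 * tg 3 := by
  have := rel_mk (show ((t 3 * t 0 * (t 3)⁻¹) * (t 0)⁻¹ : F4) ∈ relsG by simp [relsG])
  rw [map_mul, map_inv, map_mul, map_inv, map_mul, mk_t, mk_t] at this
  have h := mul_inv_eq_one.mp this
  exact mul_inv_eq_iff_eq_mul.mp h

lemma r9 : tg 3 * tg 1 = tg 1 ^ 4 * tg 3 := by
  have := rel_mk (show ((t 3 * t 1 * (t 3)⁻¹) * (t 1 ^ 4)⁻¹ : F4) ∈ relsG by simp [relsG])
  rw [map_mul, map_inv, map_mul, map_inv, map_mul, map_pow, mk_t, mk_t] at this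
  have h := mul_inv_eq_one.mp this
  exact mul_inv_eq_iff_eq_mul.mp h

lemma r10 : tg 3 * tg 2 = tg 2 ^ 2 * tg 3 := by
  have := rel_mk (show ((t 3 * t 2 * (t 3)⁻¹) * (t 2 ^ 2)⁻¹ : F4) ∈ relsG by simp [relsG])
  rw [map_mul, map_inv, map_mul, map_inv, map_mul, map_pow, mk_t, mk_t] at this
  have h := mul_inv_eq_one.mp this
  exact mul_inv_eq_iff_eq_mul.mp h

/-- `t₂ t₁ = t₁ t₂⁶`. -/
lemma d1 : tg 1 * tg 0 = tg 0 * tg 1 ^ 6 := by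
  have l : tg 0 * (tg 1 * tg 0 * tg 1) = tg 0 * (tg 0 * tg 1 ^ 6 * tg 1) := by
    have lhs : tg 0 * (tg 1 * tg 0 * tg 1) = (tg 0 * tg 1) ^ 2 := by
      rw [sq]; simp [mul_assoc]
    have rhs : tg 0 * (tg 0 * tg 1 ^ 6 * tg 1) = tg 0 ^ 2 * tg 1 ^ 7 := by
      rw [sq]; simp [mul_assoc, ← pow_succ]
    rw [lhs, rhs, r3, r1, r2, one_mul]
  exact mul_right_cancel (mul_left_cancel l)

section GroupLemmas

variable {Gr : Type*} [Group Gr]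

lemma pow_swap {x a y : Gr} (h : x * a = a * y) : ∀ n : ℕ, x ^ n * a = a * y ^ n
  | 0 => by simp
  | n + 1 => by
      rw [pow_succ, mul_assoc, h, ← mul_assoc, pow_swap h n, mul_assoc, ← pow_succ]

lemma conj_pow {a x : Gr} {k : ℕ} (h : a * x = x ^ k * a) :
    ∀ m : ℕ, a * x ^ m = x ^ (k * m) * a
  | 0 => by simp
  | m + 1 => by
      rw [pow_succ, ← mul_assoc, conj_pow h m, mul_assoc, h, ← mul_assoc, ← pow_add,
        Nat.mul_succ]

lemma conj_pow_pow {a x : Gr} {k : ℕ} (h : a * x = x ^ k * a) :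
    ∀ d m : ℕ, a ^ d * x ^ m = x ^ (k ^ d * m) * a ^ d
  | 0, m => by simp
  | d + 1, m => by
      rw [pow_succ, mul_assoc, conj_pow h m, ← mul_assoc, conj_pow_pow h d (k * m),
        mul_assoc, ← pow_succ, show k ^ d * (k * m) = k ^ (d + 1) * m by ring]

lemma reassoc {p q r s z : Gr} (h : p * q = r * s) : p * (q * z) = r * (s * z) := by
  rw [← mul_assoc, h, mul_assoc]

lemma pow_mod_of_pow_eq_one {x : Gr} {n : ℕ} (hx : x ^ n = 1) (m : ℕ) :
    x ^ m = x ^ (m % n) := by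
  conv_lhs => rw [← Nat.div_add_mod m n]
  rw [pow_add, pow_mul, hx, one_pow, one_mul]

end GroupLemmas

/-- Normal form words. -/
def F (a b c d : ℕ) : G := tg 0 ^ a * tg 1 ^ b * tg 2 ^ c * tg 3 ^ d

lemma step0 (a b c d : ℕ) : F a b c d * tg 0 = F (a + 1) (6 * b) c d := by
  have h3 : tg 3 ^ d * tg 0 = tg 0 * tg 3 ^ d := pow_swap r8 d
  have h2 : tg 2 ^ c * tg 0 = tg 0 * tg 2 ^ c := pow_swap r6.symm c
  have h1 : tg 1 ^ b * tg 0 = tg 0 * tg 1 ^ (6 * b) := by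
    rw [pow_mul]; exact pow_swap d1 b
  simp only [F, mul_assoc]
  rw [h3, reassoc h2, reassoc h1, ← mul_assoc, ← pow_succ]

lemma step1 (a b c d : ℕ) : F a b c d * tg 1 = F a (b + 4 ^ d) c d := by
  have h3 : tg 3 ^ d * tg 1 = tg 1 ^ (4 ^ d) * tg 3 ^ d := by
    have := conj_pow_pow r9 d 1
    simpa using this
  have h2 : tg 2 ^ c * tg 1 ^ (4 ^ d) = tg 1 ^ (4 ^ d) * tg 2 ^ c := by
    have h : tg 2 * tg 1 = tg 1 ^ 1 * tg 2 := by rw [pow_one]; exact r7.symm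
    have := conj_pow_pow h c (4 ^ d)
    simpa using this
  simp only [F, mul_assoc]
  rw [h3, reassoc h2, ← mul_assoc (tg 1 ^ b), ← pow_add]

lemma step2 (a b c d : ℕ) : F a b c d * tg 2 = F a b (c + 2 ^ d) d := by
  have h3 : tg 3 ^ d * tg 2 = tg 2 ^ (2 ^ d) * tg 3 ^ d := by
    have := conj_pow_pow r10 d 1
    simpa using this
  simp only [F, mul_assoc]
  rw [h3, ← mul_assoc (tg 2 ^ c), ← pow_add]

lemma step3 (a b c d : ℕ) : F a b c d * tg 3 = F a b c (d + 1) := by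
  simp only [F, mul_assoc, ← pow_succ]

lemma F_reduce (a b c d : ℕ) : F a b c d = F (a % 2) (b % 7) (c % 7) (d % 3) := by
  unfold F
  rw [pow_mod_of_pow_eq_one r1 a, pow_mod_of_pow_eq_one r2 b, pow_mod_of_pow_eq_one r4 c,
    pow_mod_of_pow_eq_one r5 d]

/-- The set of elements expressible in normal form. -/
def S (g : G) : Prop := ∃ a b c d : ℕ, g = F a b c d

lemma S_one : S 1 := ⟨0, 0, 0, 0, by simp [F]⟩

lemma S_mul_gen {g : G} (hg : S g) (i : Fin 4) : S (g * tg i) := by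
  obtain ⟨a, b, c, d, rfl⟩ := hg
  fin_cases i
  · exact ⟨_, _, _, _, step0 a b c d⟩
  · exact ⟨_, _, _, _, step1 a b c d⟩
  · exact ⟨_, _, _, _, step2 a b c d⟩
  · exact ⟨_, _, _, _, step3 a b c d⟩

lemma S_mul_pow {g : G} (hg : S g) (i : Fin 4) : ∀ n : ℕ, S (g * tg i ^ n)
  | 0 => by simpa using hg
  | n + 1 => by
      rw [pow_succ, ← mul_assoc]
      exact S_mul_gen (S_mul_pow hg i n) i

lemma S_mul {g h : G} (hg : S g) (hh : S h) : S (g * h) := by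
  obtain ⟨a, b, c, d, rfl⟩ := hh
  have e : g * F a b c d = ((g * tg 0 ^ a) * tg 1 ^ b) * tg 2 ^ c * tg 3 ^ d := by
    simp [F, mul_assoc]
  rw [e]
  exact S_mul_pow (S_mul_pow (S_mul_pow (S_mul_pow hg 0 a) 1 b) 2 c) 3 d

lemma S_inv_gen (i : Fin 4) : S ((tg i)⁻¹) := by
  have key : ∀ (k : ℕ), tg i ^ (k + 1) = 1 → S ((tg i)⁻¹) := by
    intro k hk
    have : (tg i)⁻¹ = tg i ^ k := by
      refine inv_eq_of_mul_eq_one_right ?_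
      rw [← pow_succ']; exact hk
    rw [this]
    simpa using S_mul_pow S_one i k
  fin_cases i
  · exact key 1 r1
  · exact key 6 r2
  · exact key 6 r4
  · exact key 2 r5

lemma S_all (g : G) : S g := by
  obtain ⟨z, rfl⟩ := PresentedGroup.mk_surjective relsG g
  induction z using FreeGroup.induction_on with
  | C1 => simpa using S_one
  | of x =>
      have : PresentedGroup.mk relsG (FreeGroup.of x) = tg x := rfl
      rw [this]
      simpa using S_mul_gen S_one x
  | inv_of x _ =>
      rw [map_inv]
      have : PresentedGroup.mk relsG (FreeGroup.of x) = tg x := rfl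
      rw [this]
      exact S_inv_gen x
  | mul x y hx hy =>
      rw [map_mul]
      exact S_mul hx hy

/-! ### The permutation model -/

abbrev P : Type := Equiv.Perm (ZMod 7 × ZMod 7)

def x0 : P := ⟨fun p => (-p.1, p.2), fun p => (-p.1, p.2), by decide, by decide⟩
def x1 : P := ⟨fun p => (p.1 + 1, p.2), fun p => (p.1 - 1, p.2), by decide, by decide⟩
def x2 : P := ⟨fun p => (p.1, p.2 + 1), fun p => (p.1, p.2 - 1), by decide, by decide⟩
def x3 : P := ⟨fun p => (4 * p.1, 2 * p.2), fun p => (2 * p.1, 4 * p.2), by decide, by decide⟩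

def xg : Fin 4 → P := ![x0, x1, x2, x3]

lemma hrel : ∀ r ∈ relsG, FreeGroup.lift xg r = 1 := by
  intro r hr
  simp only [relsG, Set.mem_insert_iff, Set.mem_singleton_iff] at hr
  rcases hr with rfl | rfl | rfl | rfl | rfl | rfl | rfl | rfl | rfl | rfl <;>
    simp only [t, map_mul, map_pow, map_inv, FreeGroup.lift_apply_of, xg] <;> decide

/-- The homomorphism `G →* P`. -/
def φ : G →* P := PresentedGroup.toGroup hrel

lemma φ_tg (i : Fin 4) : φ (tg i) = xg i := PresentedGroup.toGroup.of hrel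

lemma φ_F (a b c d : ℕ) : φ (F a b c d) = xg 0 ^ a * xg 1 ^ b * xg 2 ^ c * xg 3 ^ d := by
  simp [F, map_mul, map_pow, φ_tg]

/-- The index type. -/
abbrev T : Type := Fin 2 × Fin 7 × Fin 7 × Fin 3

def m (p : T) : P := xg 0 ^ (p.1 : ℕ) * xg 1 ^ (p.2.1 : ℕ) * xg 2 ^ (p.2.2.1 : ℕ) * xg 3 ^ (p.2.2.2 : ℕ)

def ev (p : T) : (ZMod 7 × ZMod 7) × (ZMod 7 × ZMod 7) := (m p (0, 0), m p (1, 0))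

set_option maxRecDepth 100000 in
set_option maxHeartbeats 4000000 in
lemma ev_inj : Function.Injective ev := by
  have hcard : (Finset.univ.image ev).card = 294 := by decide
  have huniv : (Finset.univ : Finset T).card = 294 := by simp
  have := Finset.injOn_of_card_image_eq (f := ev) (s := Finset.univ) (by rw [hcard, huniv])
  intro p q h
  exact this (Finset.mem_coe.mpr (Finset.mem_univ p)) (Finset.mem_coe.mpr (Finset.mem_univ q)) h

lemma m_inj : Function.Injective m := fun p q h => ev_inj (by unfold ev; rw [h])

/-- The normal form map on the finite index type. -/
def F' (p : T) : G := F (p.1 : ℕ) (p.2.1 : ℕ) (p.2.2.1 : ℕ) (p.2.2.2 : ℕ)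

lemma F'_surj : Function.Surjective F' := by
  intro g
  obtain ⟨a, b, c, d, rfl⟩ := S_all g
  refine ⟨⟨⟨a % 2, Nat.mod_lt _ (by norm_num)⟩, ⟨b % 7, Nat.mod_lt _ (by norm_num)⟩,
    ⟨c % 7, Nat.mod_lt _ (by norm_num)⟩, ⟨d % 3, Nat.mod_lt _ (by norm_num)⟩⟩, ?_⟩
  rw [F']
  exact (F_reduce a b c d).symm

lemma F'_inj : Function.Injective F' := by
  intro p q h
  apply m_inj
  have : φ (F' p) = φ (F' q) := by rw [h]
  rwa [F', F', φ_F, φ_F] at this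

end CardGAux

/-- The finitely presented group `G` has exactly 294 elements. -/
theorem card_G : Nat.card G = 294 := by
  have hb : Function.Bijective CardGAux.F' := ⟨CardGAux.F'_inj, CardGAux.F'_surj⟩
  have := Nat.card_eq_of_bijective _ hb
  rw [← this]
  simp [Nat.card_eq_fintype_card]
end

section
/- The images of the elements $bz^2b^{-1}z$ and $b^4$ under the quotient map $\bar\Gamma \to \bar\Gamma/\Gamma_Y$ generate the quotient group $\bar\Gamma/\Gamma_Y$. -/
/-- The free group on two generators `z` (index 0) and `b` (index 1). -/
abbrev F2 : Type := FreeGroup (Fin 2)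

/-- The generator `z` of the free group. -/
def zf : F2 := FreeGroup.of 0

/-- The generator `b` of the free group. -/
def bf : F2 := FreeGroup.of 1

/-- The relations of the group `Γ̄` from Cartwright–Steger. -/
def rels : Set F2 :=
  { zf ^ 7,
    (bf ^ (-2 : ℤ) * zf) ^ 3,
    (bf ^ 2 * zf ^ (-2 : ℤ) * bf ^ 2 * zf ^ 2) ^ 3,
    (bf ^ 2 * zf ^ (-2 : ℤ) * bf ^ 2 * zf ^ 4) ^ 3,
    bf ^ 3 * zf ^ (-2 : ℤ) * bf⁻¹ * zf ^ 2 * bf ^ (-2 : ℤ) * zf,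
    bf ^ 3 * zf * bf ^ 3 * zf ^ 3 * bf * zf ^ 2 * bf⁻¹ * zf⁻¹,
    bf ^ 3 * zf ^ 2 * bf ^ 2 * zf ^ (-2 : ℤ) * bf⁻¹ * zf⁻¹ * bf ^ (-3 : ℤ) * zf * bf⁻¹ * zf⁻¹ }

/-- The maximal arithmetic group `Γ̄`, given by its finite presentation. -/
abbrev GammaBar : Type := PresentedGroup rels

/-- The generator `z` of `Γ̄`. -/
def z : GammaBar := PresentedGroup.of 0

/-- The generator `b` of `Γ̄`. -/
def b : GammaBar := PresentedGroup.of 1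

/-- The subgroup `Γ_X` of `Γ̄`. -/
def GammaX : Subgroup GammaBar :=
  Subgroup.closure {b ^ 3, z * b ^ 3 * z, b * z ^ 2 * b⁻¹ * z}

/-- The subgroup `Γ_Y` of `Γ̄`. -/
def GammaY : Subgroup GammaBar :=
  Subgroup.closure {b ^ 3, (z * b * z⁻¹) ^ 3, b * z * b ^ 2 * z ^ (-2 : ℤ), z * b * z ^ 3 * b⁻¹}

/-- `Γ_Z`, the commutator subgroup of `Γ_X`: the subgroup of `Γ̄` generated by all
commutators `[g, h]` with `g, h ∈ Γ_X`. -/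
def GammaZ : Subgroup GammaBar := ⁅GammaX, GammaX⁆

/-- The images of `bz²b⁻¹z` and `b⁴` under the quotient map `Γ̄ → Γ̄/Γ_Y`
generate the quotient group `Γ̄/Γ_Y`. -/
theorem images_generate_quotient_GammaY [GammaY.Normal] :
    Subgroup.closure
      {QuotientGroup.mk (b * z ^ 2 * b⁻¹ * z),
       (QuotientGroup.mk (b ^ 4) : GammaBar ⧸ GammaY)} = ⊤ := by
  set π : GammaBar →* GammaBar ⧸ GammaY := QuotientGroup.mk' GammaY with hπ
  set B : GammaBar ⧸ GammaY := π b with hB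
  set Z : GammaBar ⧸ GammaY := π z with hZ
  set H : Subgroup (GammaBar ⧸ GammaY) := Subgroup.closure
      {QuotientGroup.mk (b * z ^ 2 * b⁻¹ * z),
       (QuotientGroup.mk (b ^ 4) : GammaBar ⧸ GammaY)} with hH
  -- relations in the quotient
  have hb3 : B ^ 3 = 1 := by
    have : π (b ^ 3) = 1 := (QuotientGroup.eq_one_iff _).2
      (Subgroup.subset_closure (by simp [GammaY]))
    simpa using this
  have h2 : B * Z * B ^ 2 = Z ^ 2 := by
    have : π (b * z * b ^ 2 * z ^ (-2 : ℤ)) = 1 := (QuotientGroup.eq_one_iff _).2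
      (Subgroup.subset_closure (by simp))
    have h' : B * Z * B ^ 2 * (Z ^ 2)⁻¹ = 1 := by
      simpa [zpow_neg, mul_assoc] using this
    have := mul_eq_one_iff_eq_inv.mp h'
    simpa using this
  -- generators in H
  have hCmem : B * Z ^ 2 * B⁻¹ * Z ∈ H := by
    apply Subgroup.subset_closure
    left
    simp [hπ, hB, hZ, QuotientGroup.mk'_apply]
  have hBmem : B ∈ H := by
    have h4 : B ^ 4 ∈ H := by
      apply Subgroup.subset_closure
      right
      simp [hπ, hB, QuotientGroup.mk'_apply]
    have : B ^ 4 = B := by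
      have : B ^ 4 = B ^ 3 * B := by group
      rw [this, hb3, one_mul]
    rwa [this] at h4
  have hWmem : Z * B * Z ∈ H := by
    have e1 : Z * B * Z = B⁻¹ * (B⁻¹ * (B * Z ^ 2 * B⁻¹ * Z)) := by
      rw [show B * Z ^ 2 * B⁻¹ * Z = B * (B * Z * B ^ 2) * B⁻¹ * Z from by rw [h2]]
      group
    rw [e1]
    exact Subgroup.mul_mem _ (Subgroup.inv_mem _ hBmem)
      (Subgroup.mul_mem _ (Subgroup.inv_mem _ hBmem) hCmem)
  have hZmem : Z ∈ H := by
    have key : (Z * B * Z) * (Z * B * Z) = B * Z * B := by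
      calc (Z * B * Z) * (Z * B * Z) = Z * B * Z ^ 2 * B * Z := by simp [pow_succ, pow_one, mul_assoc]
        _ = Z * B * (B * Z * B ^ 2) * B * Z := by rw [h2]
        _ = Z * B ^ 2 * Z * B ^ 3 * Z := by simp [pow_succ, pow_one, mul_assoc]
        _ = Z * B ^ 2 * Z ^ 2 := by rw [hb3]; simp [pow_succ, pow_one, mul_assoc]
        _ = Z * B ^ 2 * (B * Z * B ^ 2) := by rw [h2]
        _ = Z * B ^ 3 * Z * B ^ 2 := by simp [pow_succ, pow_one, mul_assoc]
        _ = Z ^ 2 * B ^ 2 := by rw [hb3]; simp [pow_succ, pow_one, mul_assoc]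
        _ = B * Z * B ^ 2 * B ^ 2 := by rw [h2]
        _ = B * Z * B ^ 3 * B := by simp [pow_succ, pow_one, mul_assoc]
        _ = B * Z * B := by rw [hb3]; simp
    have hBZB : B * Z * B ∈ H := key ▸ Subgroup.mul_mem _ hWmem hWmem
    have : Z = B⁻¹ * (B * Z * B) * B⁻¹ := by group
    rw [this]
    exact Subgroup.mul_mem _ (Subgroup.mul_mem _ (Subgroup.inv_mem _ hBmem) hBZB)
      (Subgroup.inv_mem _ hBmem)
  -- the quotient is generated by B and Z
  rw [eq_top_iff]
  have htop : Subgroup.map π ⊤ = ⊤ :=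
    Subgroup.map_top_of_surjective _ (QuotientGroup.mk'_surjective _)
  rw [← htop, ← PresentedGroup.closure_range_of (rels := rels), MonoidHom.map_closure]
  apply (Subgroup.closure_le _).mpr
  rintro x ⟨y, ⟨i, rfl⟩, rfl⟩
  fin_cases i
  · exact hZmem
  · exact hBmem
end
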